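/- Let V and V_* be countably infinite-dimensional vector spaces over a field K with a nondegenerate bilinear pairing p : V × V_* → K. Then there exists a basis {v_α}_{α∈ℕ} of V and a basis {v_α^*}_{α∈ℕ} of V_* such that p(v_α, v_β^*) = δ_{αβ} for all α, β. -/

import Mathlib

open Submodule Set

section Mackey

variable {K V W : Type*} [Field K]
  [AddCommGroup V] [Module K V] [AddCommGroup W] [Module K W]

lemma mackey_exists_notMem (e : Module.Basis ℕ K V) {s : Set V} (hs : s.Finite) :
    ∃ x : V, x ∉ span K s := by
  by_contra h
  push_neg at h
  have htop : span K s = ⊤ := eq_top_iff.mpr fun x _ => h x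
  have hfin : Module.Finite K V :=
    Module.finite_def.mpr (Submodule.fg_def.mpr ⟨s, hs, htop⟩)
  have : Finite ℕ := Module.Finite.finite_basis e
  exact not_finite ℕ

variable (p : V →ₗ[K] W →ₗ[K] K)

lemma mackey_extend_left
    (hpl : ∀ v : V, (∀ w : W, p v w = 0) → v = 0)
    {n : ℕ} {v : ℕ → V} {w : ℕ → W}
    (hd : ∀ i j, i < n → j < n → p (v i) (w j) = if i = j then 1 else 0)
    {x : V} (hx : x ∉ span K (v '' Iio n)) :
    ∃ (v' : V) (w' : W), p v' w' = 1 ∧ (∀ j, j < n → p v' (w j) = 0) ∧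
      (∀ i, i < n → p (v i) w' = 0) ∧ x ∈ span K (insert v' (v '' Iio n)) := by
  classical
  set v' : V := x - ∑ i ∈ Finset.range n, p x (w i) • v i with hv'def
  have hmem : ∑ i ∈ Finset.range n, p x (w i) • v i ∈ span K (v '' Iio n) :=
    Submodule.sum_mem _ fun i hi =>
      smul_mem _ _ (subset_span ⟨i, Finset.mem_range.mp hi, rfl⟩)
  have hv'ne : v' ≠ 0 := by
    intro h
    apply hx
    have hx' : x = ∑ i ∈ Finset.range n, p x (w i) • v i := by
      have := h
      rw [hv'def, sub_eq_zero] at this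
      exact this
    rw [hx']; exact hmem
  have hv'w : ∀ j, j < n → p v' (w j) = 0 := by
    intro j hj
    have : p v' (w j) = p x (w j) - ∑ i ∈ Finset.range n,
        p x (w i) * p (v i) (w j) := by
      simp [hv'def, map_sub, map_sum]
    rw [this, Finset.sum_eq_single j (fun i hi hij => by
        rw [hd i j (Finset.mem_range.mp hi) hj, if_neg hij, mul_zero])
      (fun h => absurd (Finset.mem_range.mpr hj) h)]
    rw [hd j j hj hj, if_pos rfl, mul_one, sub_self]
  obtain ⟨w0, hw0⟩ : ∃ w0, p v' w0 ≠ 0 := by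
    by_contra h
    push_neg at h
    exact hv'ne (hpl v' h)
  set c : K := p v' w0 with hc
  set w' : W := c⁻¹ • w0 - ∑ i ∈ Finset.range n, (c⁻¹ * p (v i) w0) • w i with hw'def
  refine ⟨v', w', ?_, hv'w, ?_, ?_⟩
  · have : p v' w' = c⁻¹ * p v' w0 - ∑ i ∈ Finset.range n,
        (c⁻¹ * p (v i) w0) * p v' (w i) := by
      simp [hw'def, map_sub, map_sum, map_smul, smul_eq_mul]
    rw [this, Finset.sum_eq_zero (fun i hi => by
      rw [hv'w i (Finset.mem_range.mp hi), mul_zero])]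
    field_simp
    simp [hc]
  · intro i hi
    have : p (v i) w' = c⁻¹ * p (v i) w0 - ∑ j ∈ Finset.range n,
        (c⁻¹ * p (v j) w0) * p (v i) (w j) := by
      simp [hw'def, map_sub, map_sum, map_smul, smul_eq_mul]
    rw [this, Finset.sum_eq_single i (fun j hj hji => by
        rw [hd i j hi (Finset.mem_range.mp hj), if_neg (fun h => hji h.symm), mul_zero])
      (fun h => absurd (Finset.mem_range.mpr hi) h)]
    rw [hd i i hi hi, if_pos rfl, mul_one, sub_self]
  · have : x = v' + ∑ i ∈ Finset.range n, p x (w i) • v i := by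
      rw [hv'def]; abel
    rw [this]
    exact Submodule.add_mem _ (subset_span (mem_insert _ _))
      (span_mono (subset_insert _ _) hmem)

lemma mackey_extend_right
    (hpr : ∀ w : W, (∀ v : V, p v w = 0) → w = 0)
    {n : ℕ} {v : ℕ → V} {w : ℕ → W}
    (hd : ∀ i j, i < n → j < n → p (v i) (w j) = if i = j then 1 else 0)
    {y : W} (hy : y ∉ span K (w '' Iio n)) :
    ∃ (v' : V) (w' : W), p v' w' = 1 ∧ (∀ j, j < n → p v' (w j) = 0) ∧
      (∀ i, i < n → p (v i) w' = 0) ∧ y ∈ span K (insert w' (w '' Iio n)) := by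
  classical
  set w' : W := y - ∑ i ∈ Finset.range n, p (v i) y • w i with hw'def
  have hmem : ∑ i ∈ Finset.range n, p (v i) y • w i ∈ span K (w '' Iio n) :=
    Submodule.sum_mem _ fun i hi =>
      smul_mem _ _ (subset_span ⟨i, Finset.mem_range.mp hi, rfl⟩)
  have hw'ne : w' ≠ 0 := by
    intro h
    apply hy
    have hy' : y = ∑ i ∈ Finset.range n, p (v i) y • w i := by
      have := h
      rw [hw'def, sub_eq_zero] at this
      exact this
    rw [hy']; exact hmem
  have hvw' : ∀ i, i < n → p (v i) w' = 0 := by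
    intro i hi
    have : p (v i) w' = p (v i) y - ∑ j ∈ Finset.range n,
        p (v j) y * p (v i) (w j) := by
      simp [hw'def, map_sub, map_sum, map_smul, smul_eq_mul]
    rw [this, Finset.sum_eq_single i (fun j hj hji => by
        rw [hd i j hi (Finset.mem_range.mp hj), if_neg (fun h => hji h.symm), mul_zero])
      (fun h => absurd (Finset.mem_range.mpr hi) h)]
    rw [hd i i hi hi, if_pos rfl, mul_one, sub_self]
  obtain ⟨v0, hv0⟩ : ∃ v0, p v0 w' ≠ 0 := by
    by_contra h
    push_neg at h
    exact hw'ne (hpr w' h)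
  set c : K := p v0 w' with hc
  set v' : V := c⁻¹ • v0 - ∑ i ∈ Finset.range n, (c⁻¹ * p v0 (w i)) • v i with hv'def
  refine ⟨v', w', ?_, ?_, hvw', ?_⟩
  · have : p v' w' = c⁻¹ * p v0 w' - ∑ i ∈ Finset.range n,
        (c⁻¹ * p v0 (w i)) * p (v i) w' := by
      simp [hv'def, map_sub, map_sum, map_smul, smul_eq_mul]
    rw [this, Finset.sum_eq_zero (fun i hi => by
      rw [hvw' i (Finset.mem_range.mp hi), mul_zero])]
    field_simp
    simp [hc]
  · intro j hj
    have : p v' (w j) = c⁻¹ * p v0 (w j) - ∑ i ∈ Finset.range n,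
        (c⁻¹ * p v0 (w i)) * p (v i) (w j) := by
      simp [hv'def, map_sub, map_sum, map_smul, smul_eq_mul]
    rw [this, Finset.sum_eq_single j (fun i hi hij => by
        rw [hd i j (Finset.mem_range.mp hi) hj, if_neg hij, mul_zero])
      (fun h => absurd (Finset.mem_range.mpr hj) h)]
    rw [hd j j hj hj, if_pos rfl, mul_one, sub_self]
  · have : y = w' + ∑ i ∈ Finset.range n, p (v i) y • w i := by
      rw [hw'def]; abel
    rw [this]
    exact Submodule.add_mem _ (subset_span (mem_insert _ _))
      (span_mono (subset_insert _ _) hmem)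

lemma mackey_exists_next
    (hpl : ∀ v : V, (∀ w : W, p v w = 0) → v = 0)
    (hpr : ∀ w : W, (∀ v : V, p v w = 0) → w = 0)
    (e : Module.Basis ℕ K V) (f : Module.Basis ℕ K W) (n : ℕ) (q : ℕ → V × W) :
    ∃ vw : V × W,
      (∀ i j, i < n → j < n → p (q i).1 (q j).2 = if i = j then 1 else 0) →
        p vw.1 vw.2 = 1 ∧ (∀ j, j < n → p vw.1 (q j).2 = 0) ∧
        (∀ i, i < n → p (q i).1 vw.2 = 0) ∧
        (n % 2 = 0 → e (n / 2) ∈ span K (insert vw.1 ((fun i => (q i).1) '' Iio n))) ∧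
        (n % 2 = 1 → f (n / 2) ∈ span K (insert vw.2 ((fun i => (q i).2) '' Iio n))) := by
  classical
  by_cases hd : ∀ i j, i < n → j < n → p (q i).1 (q j).2 = if i = j then 1 else 0
  · rcases Nat.mod_two_eq_zero_or_one n with hpar | hpar
    · have hfin : ((fun i => (q i).1) '' Iio n).Finite := (Set.finite_Iio n).image _
      have hx : ∃ x : V, x ∉ span K ((fun i => (q i).1) '' Iio n) ∧
          e (n / 2) ∈ span K (insert x ((fun i => (q i).1) '' Iio n)) := by
        by_cases he : e (n / 2) ∈ span K ((fun i => (q i).1) '' Iio n)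
        · obtain ⟨x, hx⟩ := mackey_exists_notMem e hfin
          exact ⟨x, hx, span_mono (subset_insert _ _) he⟩
        · exact ⟨e (n / 2), he, subset_span (mem_insert _ _)⟩
      obtain ⟨x, hxn, hxe⟩ := hx
      obtain ⟨v', w', h1, h2, h3, h4⟩ := mackey_extend_left p hpl hd hxn
      refine ⟨(v', w'), fun _ => ⟨h1, h2, h3, fun _ => ?_, fun h => by omega⟩⟩
      have hle : span K (insert x ((fun i => (q i).1) '' Iio n)) ≤
          span K (insert v' ((fun i => (q i).1) '' Iio n)) :=
        span_le.mpr (insert_subset_iff.mpr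
          ⟨h4, (subset_insert _ _).trans subset_span⟩)
      exact hle hxe
    · have hfin : ((fun i => (q i).2) '' Iio n).Finite := (Set.finite_Iio n).image _
      have hy : ∃ y : W, y ∉ span K ((fun i => (q i).2) '' Iio n) ∧
          f (n / 2) ∈ span K (insert y ((fun i => (q i).2) '' Iio n)) := by
        by_cases hf : f (n / 2) ∈ span K ((fun i => (q i).2) '' Iio n)
        · obtain ⟨y, hy⟩ := mackey_exists_notMem f hfin
          exact ⟨y, hy, span_mono (subset_insert _ _) hf⟩
        · exact ⟨f (n / 2), hf, subset_span (mem_insert _ _)⟩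
      obtain ⟨y, hyn, hye⟩ := hy
      obtain ⟨v', w', h1, h2, h3, h4⟩ := mackey_extend_right p hpr hd hyn
      refine ⟨(v', w'), fun _ => ⟨h1, h2, h3, fun h => by omega, fun _ => ?_⟩⟩
      have hle : span K (insert y ((fun i => (q i).2) '' Iio n)) ≤
          span K (insert w' ((fun i => (q i).2) '' Iio n)) :=
        span_le.mpr (insert_subset_iff.mpr
          ⟨h4, (subset_insert _ _).trans subset_span⟩)
      exact hle hye
  · exact ⟨(0, 0), fun h => absurd h hd⟩

variable (hpl : ∀ v : V, (∀ w : W, p v w = 0) → v = 0)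
  (hpr : ∀ w : W, (∀ v : V, p v w = 0) → w = 0)
  (e : Module.Basis ℕ K V) (f : Module.Basis ℕ K W)

noncomputable def mackeyAux : ℕ → ℕ → V × W
  | 0 => fun _ => 0
  | (n + 1) => Function.update (mackeyAux n) n
      (Classical.choose (mackey_exists_next p hpl hpr e f n (mackeyAux n)))

noncomputable def mackeySeq (n : ℕ) : V × W := mackeyAux p hpl hpr e f (n + 1) n

lemma mackeyAux_succ (n : ℕ) : mackeyAux p hpl hpr e f (n + 1) =
    Function.update (mackeyAux p hpl hpr e f n) n
      (Classical.choose (mackey_exists_next p hpl hpr e f n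
        (mackeyAux p hpl hpr e f n))) := rfl

lemma mackeyAux_stable : ∀ k m, m < k →
    mackeyAux p hpl hpr e f k m = mackeySeq p hpl hpr e f m := by
  intro k
  induction k with
  | zero => intro m hm; omega
  | succ k ih =>
    intro m hm
    rcases Nat.lt_succ_iff_lt_or_eq.mp hm with h | h
    · rw [mackeyAux_succ, Function.update_of_ne (by omega)]
      exact ih m h
    · subst h; rfl

lemma mackeySeq_eq (n : ℕ) : mackeySeq p hpl hpr e f n =
    Classical.choose (mackey_exists_next p hpl hpr e f n
      (mackeyAux p hpl hpr e f n)) := by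
  unfold mackeySeq
  rw [mackeyAux_succ, Function.update_self]

lemma mackey_dual : ∀ n, ∀ i j, i < n → j < n →
    p (mackeySeq p hpl hpr e f i).1 (mackeySeq p hpl hpr e f j).2 =
      if i = j then 1 else 0 := by
  intro n
  induction n with
  | zero => intro i j hi hj; omega
  | succ n ih =>
    have hq : ∀ m, m < n → mackeyAux p hpl hpr e f n m = mackeySeq p hpl hpr e f m :=
      mackeyAux_stable p hpl hpr e f n
    have hd : ∀ i j, i < n → j < n →
        p ((mackeyAux p hpl hpr e f n) i).1 ((mackeyAux p hpl hpr e f n) j).2 =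
          if i = j then 1 else 0 := by
      intro i j hi hj
      rw [hq i hi, hq j hj]
      exact ih i j hi hj
    obtain ⟨h1, h2, h3, -, -⟩ :=
      Classical.choose_spec (mackey_exists_next p hpl hpr e f n
        (mackeyAux p hpl hpr e f n)) hd
    intro i j hi hj
    rcases Nat.lt_succ_iff_lt_or_eq.mp hi with hi' | hi' <;>
      rcases Nat.lt_succ_iff_lt_or_eq.mp hj with hj' | hj'
    · exact ih i j hi' hj'
    · rw [hj', if_neg (by omega), mackeySeq_eq p hpl hpr e f n]
      have := h3 i hi'
      rwa [hq i hi'] at this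
    · rw [hi', if_neg (by omega), mackeySeq_eq p hpl hpr e f n]
      have := h2 j hj'
      rwa [hq j hj'] at this
    · rw [hi', hj', if_pos rfl, mackeySeq_eq p hpl hpr e f n]
      exact h1

lemma mackey_span_e (m : ℕ) :
    e m ∈ span K (Set.range fun k => (mackeySeq p hpl hpr e f k).1) := by
  obtain ⟨n, hn1, hn2⟩ : ∃ n, n % 2 = 0 ∧ n / 2 = m := ⟨2 * m, by omega, by omega⟩
  have hq : ∀ k, k < n → mackeyAux p hpl hpr e f n k = mackeySeq p hpl hpr e f k :=
    mackeyAux_stable p hpl hpr e f n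
  have hd : ∀ i j, i < n → j < n →
      p ((mackeyAux p hpl hpr e f n) i).1 ((mackeyAux p hpl hpr e f n) j).2 =
        if i = j then 1 else 0 := by
    intro i j hi hj
    rw [hq i hi, hq j hj]
    exact mackey_dual p hpl hpr e f n i j hi hj
  obtain ⟨-, -, -, h4, -⟩ :=
    Classical.choose_spec (mackey_exists_next p hpl hpr e f n
      (mackeyAux p hpl hpr e f n)) hd
  have hmem := h4 hn1
  rw [← hn2]
  have hsub : insert (Classical.choose (mackey_exists_next p hpl hpr e f n
        (mackeyAux p hpl hpr e f n))).1
        ((fun i => ((mackeyAux p hpl hpr e f n) i).1) '' Iio n) ⊆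
      Set.range fun k => (mackeySeq p hpl hpr e f k).1 := by
    rintro z (rfl | ⟨i, hi, rfl⟩)
    · exact ⟨n, congrArg Prod.fst (mackeySeq_eq p hpl hpr e f n)⟩
    · exact ⟨i, (congrArg Prod.fst (hq i (mem_Iio.mp hi))).symm⟩
  exact span_le.mpr (hsub.trans subset_span) hmem

lemma mackey_span_f (m : ℕ) :
    f m ∈ span K (Set.range fun k => (mackeySeq p hpl hpr e f k).2) := by
  obtain ⟨n, hn1, hn2⟩ : ∃ n, n % 2 = 1 ∧ n / 2 = m := ⟨2 * m + 1, by omega, by omega⟩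
  have hq : ∀ k, k < n → mackeyAux p hpl hpr e f n k = mackeySeq p hpl hpr e f k :=
    mackeyAux_stable p hpl hpr e f n
  have hd : ∀ i j, i < n → j < n →
      p ((mackeyAux p hpl hpr e f n) i).1 ((mackeyAux p hpl hpr e f n) j).2 =
        if i = j then 1 else 0 := by
    intro i j hi hj
    rw [hq i hi, hq j hj]
    exact mackey_dual p hpl hpr e f n i j hi hj
  obtain ⟨-, -, -, -, h5⟩ :=
    Classical.choose_spec (mackey_exists_next p hpl hpr e f n
      (mackeyAux p hpl hpr e f n)) hd
  have hmem := h5 hn1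
  rw [← hn2]
  have hsub : insert (Classical.choose (mackey_exists_next p hpl hpr e f n
        (mackeyAux p hpl hpr e f n))).2
        ((fun i => ((mackeyAux p hpl hpr e f n) i).2) '' Iio n) ⊆
      Set.range fun k => (mackeySeq p hpl hpr e f k).2 := by
    rintro z (rfl | ⟨i, hi, rfl⟩)
    · exact ⟨n, congrArg Prod.snd (mackeySeq_eq p hpl hpr e f n)⟩
    · exact ⟨i, (congrArg Prod.snd (hq i (mem_Iio.mp hi))).symm⟩
  exact span_le.mpr (hsub.trans subset_span) hmem

end Mackey

/-- Mackey's theorem: a nondegenerate pairing of two countably infinite-dimensional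
vector spaces admits dual bases. -/
theorem stmt_0 (K : Type*) [Field K] (V W : Type*)
    [AddCommGroup V] [Module K V] [AddCommGroup W] [Module K W]
    (hV : Nonempty (Module.Basis ℕ K V)) (hW : Nonempty (Module.Basis ℕ K W))
    (p : V →ₗ[K] W →ₗ[K] K)
    (hpl : ∀ v : V, (∀ w : W, p v w = 0) → v = 0)
    (hpr : ∀ w : W, (∀ v : V, p v w = 0) → w = 0) :
    ∃ (bV : Module.Basis ℕ K V) (bW : Module.Basis ℕ K W),
      ∀ α β : ℕ, p (bV α) (bW β) = if α = β then 1 else 0 := by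
  classical
  obtain ⟨e⟩ := hV
  obtain ⟨f⟩ := hW
  set v : ℕ → V := fun k => (mackeySeq p hpl hpr e f k).1 with hv
  set w : ℕ → W := fun k => (mackeySeq p hpl hpr e f k).2 with hw
  have hdual : ∀ i j, p (v i) (w j) = if i = j then 1 else 0 := fun i j =>
    mackey_dual p hpl hpr e f (max i j + 1) i j (by omega) (by omega)
  have hliV : LinearIndependent K v := by
    rw [linearIndependent_iff']
    intro s g hsum i hi
    have h0 : p (∑ j ∈ s, g j • v j) (w i) = 0 := by rw [hsum]; simp
    simp only [map_sum, map_smul, LinearMap.sum_apply, LinearMap.smul_apply,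
      smul_eq_mul] at h0
    rw [Finset.sum_eq_single i (fun j _ hji => by
        rw [hdual j i, if_neg hji, mul_zero]) (fun h => absurd hi h)] at h0
    rwa [hdual i i, if_pos rfl, mul_one] at h0
  have hliW : LinearIndependent K w := by
    rw [linearIndependent_iff']
    intro s g hsum j hj
    have h0 : p (v j) (∑ i ∈ s, g i • w i) = 0 := by rw [hsum]; simp
    simp only [map_sum, map_smul, smul_eq_mul] at h0
    rw [Finset.sum_eq_single j (fun i _ hij => by
        rw [hdual j i, if_neg (fun h => hij h.symm), mul_zero]) (fun h => absurd hj h)] at h0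
    rwa [hdual j j, if_pos rfl, mul_one] at h0
  have hspV : ⊤ ≤ span K (Set.range v) := by
    rw [← e.span_eq]
    refine span_le.mpr ?_
    rintro _ ⟨m, rfl⟩
    exact mackey_span_e p hpl hpr e f m
  have hspW : ⊤ ≤ span K (Set.range w) := by
    rw [← f.span_eq]
    refine span_le.mpr ?_
    rintro _ ⟨m, rfl⟩
    exact mackey_span_f p hpl hpr e f m
  refine ⟨Module.Basis.mk hliV hspV, Module.Basis.mk hliW hspW, fun α β => ?_⟩
  rw [Module.Basis.mk_apply, Module.Basis.mk_apply]
  exact hdual α β
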